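/- arXiv:2410.07602 — 5 statements merged into one kernel-verified Lean document; each statement's English description precedes it below -/
import Mathlib

section
/- In the symmetric centroid path decomposition of a finite DAG, every vertex is the tail of at most one heavy edge and the head of at most one heavy edge; consequently, the edge-induced subgraph formed by the heavy edges is a disjoint union of simple directed paths. -/
open scoped Classical

/-- A directed path from `u` to `v` in the graph with edge relation `E`,
represented as the (nonempty) list of visited vertices. -/
def IsDagPath {V : Type*} (E : V → V → Prop) (u v : V) (l : List V) : Prop :=
  l.Chain' E ∧ l.head? = some u ∧ l.getLast? = some v

/-- `π(u,v)`: the number of directed paths from `u` to `v`. -/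
noncomputable def pathCount {V : Type*} (E : V → V → Prop) (u v : V) : ℕ :=
  {l : List V | IsDagPath E u v l}.ncard

/-- `π(u,W)`: the number of directed paths from `u` to a vertex of `W`. -/
noncomputable def pathCountTo {V : Type*} (E : V → V → Prop) (u : V) (W : Finset V) : ℕ :=
  ∑ w ∈ W, pathCount E u w

/-- `λ(v) = (⌊log₂ π(r,v)⌋, ⌊log₂ π(v,W)⌋)`. -/
noncomputable def lamSym {V : Type*} (E : V → V → Prop) (r : V) (W : Finset V) (v : V) :
    ℕ × ℕ :=
  (Nat.log 2 (pathCount E r v), Nat.log 2 (pathCountTo E v W))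

/-- An edge `(u,v)` is heavy if `λ(u) = λ(v)`. -/
def HeavyEdge {V : Type*} (E : V → V → Prop) (r : V) (W : Finset V) (u v : V) : Prop :=
  E u v ∧ lamSym E r W u = lamSym E r W v

/-- An edge `(u,v)` is light if it is not heavy. -/
def LightEdge {V : Type*} (E : V → V → Prop) (r : V) (W : Finset V) (u v : V) : Prop :=
  E u v ∧ lamSym E r W u ≠ lamSym E r W v

/-- The number of light edges occurring along a path given as a list of vertices. -/
noncomputable def lightEdgeCount {V : Type*} (E : V → V → Prop) (r : V) (W : Finset V)
    (l : List V) : ℕ :=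
  (l.zip l.tail).countP fun p => decide (LightEdge E r W p.1 p.2)

section Helpers

variable {V : Type*} {E : V → V → Prop}

/-- A chain relates earlier entries to later ones via `TransGen`. -/
lemma chain'_transGen_of_lt {l : List V} (hl : l.Chain' E) :
    ∀ j (hj : j < l.length) i (hi : i < l.length), i < j →
      Relation.TransGen E (l.get ⟨i, hi⟩) (l.get ⟨j, hj⟩) := by
  rw [List.Chain', List.isChain_iff_getElem] at hl
  intro j
  induction j with
  | zero => omega
  | succ j ih =>
    intro hj i hi hij
    rcases Nat.lt_succ_iff_lt_or_eq.mp hij with hc | hc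
    · have hj' : j < l.length := by omega
      exact (ih hj' i hi hc).tail (hl j (by omega))
    · subst hc
      exact Relation.TransGen.single (hl i (by omega))

lemma path_nodup (hacyc : ∀ v : V, ¬ Relation.TransGen E v v)
    {u v : V} {l : List V} (h : IsDagPath E u v l) : l.Nodup := by
  rw [List.nodup_iff_injective_get]
  rintro ⟨i, hi⟩ ⟨j, hj⟩ hij
  by_contra hne
  have hne' : i ≠ j := fun hh => hne (by simp [hh])
  rcases lt_or_gt_of_ne hne' with hc | hc
  · exact hacyc _ (hij ▸ chain'_transGen_of_lt h.1 j hj i hi hc)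
  · exact hacyc _ (hij.symm ▸ chain'_transGen_of_lt h.1 i hi j hj hc)

lemma paths_finite [Fintype V] (hacyc : ∀ v : V, ¬ Relation.TransGen E v v)
    (u v : V) : {l : List V | IsDagPath E u v l}.Finite := by
  apply Set.Finite.subset (List.finite_length_le V (Fintype.card V))
  intro l hl
  exact (path_nodup hacyc hl).length_le_card

lemma isDagPath_cons {u v w : V} {l : List V} (h : IsDagPath E v w l) (e : E u v) :
    IsDagPath E u w (u :: l) := by
  obtain ⟨hc, hh, hlast⟩ := h
  have hne : l ≠ [] := by rintro rfl; simp at hh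
  refine ⟨List.isChain_cons.mpr ⟨?_, hc⟩, rfl, ?_⟩
  · intro y hy; rw [hh] at hy; exact (Option.mem_some_iff.mp hy) ▸ e
  · obtain ⟨x, l', rfl⟩ := List.exists_cons_of_ne_nil hne
    rw [List.getLast?_cons_cons]; exact hlast

lemma isDagPath_concat {u v w : V} {l : List V} (h : IsDagPath E u v l) (e : E v w) :
    IsDagPath E u w (l ++ [w]) := by
  obtain ⟨hc, hh, hlast⟩ := h
  have hne : l ≠ [] := by rintro rfl; simp at hh
  refine ⟨?_, ?_, ?_⟩
  · rw [List.Chain', List.isChain_append]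
    refine ⟨hc, List.isChain_singleton _, ?_⟩
    intro x hx y hy
    rw [hlast] at hx
    simp only [List.head?_cons, Option.mem_some_iff] at hx hy
    rw [← hx, ← hy]; exact e
  · rw [List.head?_append_of_ne_nil _ hne]; exact hh
  · simp

lemma pathCount_pos [Fintype V] (hacyc : ∀ v : V, ¬ Relation.TransGen E v v)
    {u v : V} (h : Relation.ReflTransGen E u v) : 1 ≤ pathCount E u v := by
  have hne : {l : List V | IsDagPath E u v l}.Nonempty := by
    induction h with
    | refl => exact ⟨[u], List.isChain_singleton u, rfl, rfl⟩
    | tail _ e ih =>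
      obtain ⟨l, hl⟩ := ih
      exact ⟨l ++ [_], isDagPath_concat hl e⟩
  exact (Set.ncard_pos (paths_finite hacyc u v)).mpr hne

lemma pathCountTo_pos [Fintype V] (hacyc : ∀ v : V, ¬ Relation.TransGen E v v)
    {v : V} {W : Finset V} (h : ∃ w ∈ W, Relation.ReflTransGen E v w) :
    1 ≤ pathCountTo E v W := by
  obtain ⟨w, hw, hrt⟩ := h
  calc 1 ≤ pathCount E v w := pathCount_pos hacyc hrt
  _ ≤ pathCountTo E v W := Finset.single_le_sum (fun _ _ => Nat.zero_le _) hw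

/-- Counting: two distinct out-neighbours. -/
lemma pathCount_add_le_out [Fintype V] (hacyc : ∀ v : V, ¬ Relation.TransGen E v v)
    {u v₁ v₂ : V} (hne : v₁ ≠ v₂) (e₁ : E u v₁) (e₂ : E u v₂) (w : V) :
    pathCount E v₁ w + pathCount E v₂ w ≤ pathCount E u w := by
  have hinj : Function.Injective (fun l : List V => u :: l) := fun a b h => by
    simpa using h
  have hsub : (fun l : List V => u :: l) '' {l | IsDagPath E v₁ w l} ∪
      (fun l : List V => u :: l) '' {l | IsDagPath E v₂ w l} ⊆
      {l | IsDagPath E u w l} := by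
    rintro m (⟨l, hl, rfl⟩ | ⟨l, hl, rfl⟩)
    · exact isDagPath_cons hl e₁
    · exact isDagPath_cons hl e₂
  have hdisj : Disjoint ((fun l : List V => u :: l) '' {l | IsDagPath E v₁ w l})
      ((fun l : List V => u :: l) '' {l | IsDagPath E v₂ w l}) := by
    rw [Set.disjoint_left]
    rintro m ⟨l, hl, rfl⟩ ⟨l', hl', he⟩
    have : l' = l := by simpa using he
    subst this
    exact hne (by rw [← Option.some_inj, ← hl'.2.1, ← hl.2.1])
  calc pathCount E v₁ w + pathCount E v₂ w
      = (((fun l : List V => u :: l) '' {l | IsDagPath E v₁ w l}) ∪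
        ((fun l : List V => u :: l) '' {l | IsDagPath E v₂ w l})).ncard := by
        rw [Set.ncard_union_eq hdisj (((paths_finite hacyc _ _)).image _)
          (((paths_finite hacyc _ _)).image _),
          Set.ncard_image_of_injective _ hinj, Set.ncard_image_of_injective _ hinj]
        rfl
    _ ≤ pathCount E u w := Set.ncard_le_ncard hsub (paths_finite hacyc u w)

/-- Counting: two distinct in-neighbours. -/
lemma pathCount_add_le_in [Fintype V] (hacyc : ∀ v : V, ¬ Relation.TransGen E v v)
    {u₁ u₂ v : V} (hne : u₁ ≠ u₂) (e₁ : E u₁ v) (e₂ : E u₂ v) (r : V) :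
    pathCount E r u₁ + pathCount E r u₂ ≤ pathCount E r v := by
  have hinj : Function.Injective (fun l : List V => l ++ [v]) := fun a b h => by
    simpa using h
  have hsub : (fun l : List V => l ++ [v]) '' {l | IsDagPath E r u₁ l} ∪
      (fun l : List V => l ++ [v]) '' {l | IsDagPath E r u₂ l} ⊆
      {l | IsDagPath E r v l} := by
    rintro m (⟨l, hl, rfl⟩ | ⟨l, hl, rfl⟩)
    · exact isDagPath_concat hl e₁
    · exact isDagPath_concat hl e₂
  have hdisj : Disjoint ((fun l : List V => l ++ [v]) '' {l | IsDagPath E r u₁ l})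
      ((fun l : List V => l ++ [v]) '' {l | IsDagPath E r u₂ l}) := by
    rw [Set.disjoint_left]
    rintro m ⟨l, hl, rfl⟩ ⟨l', hl', he⟩
    have : l' = l := by simpa using he
    subst this
    exact hne (by rw [← Option.some_inj, ← hl'.2.2, ← hl.2.2])
  calc pathCount E r u₁ + pathCount E r u₂
      = (((fun l : List V => l ++ [v]) '' {l | IsDagPath E r u₁ l}) ∪
        ((fun l : List V => l ++ [v]) '' {l | IsDagPath E r u₂ l})).ncard := by
        rw [Set.ncard_union_eq hdisj (((paths_finite hacyc _ _)).image _)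
          (((paths_finite hacyc _ _)).image _),
          Set.ncard_image_of_injective _ hinj, Set.ncard_image_of_injective _ hinj]
        rfl
    _ ≤ pathCount E r v := Set.ncard_le_ncard hsub (paths_finite hacyc r v)

lemma pathCountTo_add_le [Fintype V] (hacyc : ∀ v : V, ¬ Relation.TransGen E v v)
    {u v₁ v₂ : V} (hne : v₁ ≠ v₂) (e₁ : E u v₁) (e₂ : E u v₂) (W : Finset V) :
    pathCountTo E v₁ W + pathCountTo E v₂ W ≤ pathCountTo E u W := by
  rw [pathCountTo, pathCountTo, pathCountTo, ← Finset.sum_add_distrib]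
  exact Finset.sum_le_sum fun w _ => pathCount_add_le_out hacyc hne e₁ e₂ w

/-- From `2^k ≤ a`, `2^k ≤ b` and `a + b ≤ c` conclude `k < log 2 c`. -/
lemma log_lt_of_add {k a b c : ℕ} (ha : 2 ^ k ≤ a) (hb : 2 ^ k ≤ b) (hc : a + b ≤ c) :
    k + 1 ≤ Nat.log 2 c := by
  have h2 : 2 ^ (k + 1) ≤ c := by
    rw [pow_succ, mul_two]; omega
  have h1 : 1 ≤ 2 ^ (k + 1) := Nat.one_le_two_pow
  exact (Nat.le_log_iff_pow_le one_lt_two (by omega)).mpr h2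

end Helpers

/-- in the SymCPD of a finite DAG, every vertex is the tail of at most
one heavy edge and the head of at most one heavy edge; hence the heavy edges form a
disjoint union of simple directed paths. -/
theorem symCPD_heavy_edges_form_disjoint_paths
    {V : Type*} [Fintype V] (E : V → V → Prop) (r : V) (W : Finset V)
    (hacyc : ∀ v : V, ¬ Relation.TransGen E v v)
    (hr_src : ∀ u : V, ¬ E u r)
    (hr_uniq : ∀ v : V, (∀ u : V, ¬ E u v) → v = r)
    (hW : ∀ v : V, v ∈ W ↔ ∀ u : V, ¬ E v u)
    (hcov : ∀ v : V, Relation.ReflTransGen E r v ∧ ∃ w ∈ W, Relation.ReflTransGen E v w) :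
    (∀ u v₁ v₂ : V, HeavyEdge E r W u v₁ → HeavyEdge E r W u v₂ → v₁ = v₂) ∧
    (∀ u₁ u₂ v : V, HeavyEdge E r W u₁ v → HeavyEdge E r W u₂ v → u₁ = u₂) := by
  constructor
  · intro u v₁ v₂ h₁ h₂
    by_contra hne
    obtain ⟨e₁, hl₁⟩ := h₁
    obtain ⟨e₂, hl₂⟩ := h₂
    set k := Nat.log 2 (pathCountTo E u W) with hk
    have hk₁ : Nat.log 2 (pathCountTo E v₁ W) = k := by
      have := congrArg Prod.snd hl₁; simpa [lamSym] using this.symm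
    have hk₂ : Nat.log 2 (pathCountTo E v₂ W) = k := by
      have := congrArg Prod.snd hl₂; simpa [lamSym] using this.symm
    have hp₁ : 1 ≤ pathCountTo E v₁ W := pathCountTo_pos hacyc (hcov v₁).2
    have hp₂ : 1 ≤ pathCountTo E v₂ W := pathCountTo_pos hacyc (hcov v₂).2
    have ha : 2 ^ k ≤ pathCountTo E v₁ W := hk₁ ▸ Nat.pow_log_le_self 2 (by omega)
    have hb : 2 ^ k ≤ pathCountTo E v₂ W := hk₂ ▸ Nat.pow_log_le_self 2 (by omega)
    have hc := pathCountTo_add_le hacyc hne e₁ e₂ W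
    have := log_lt_of_add ha hb hc
    omega
  · intro u₁ u₂ v h₁ h₂
    by_contra hne
    obtain ⟨e₁, hl₁⟩ := h₁
    obtain ⟨e₂, hl₂⟩ := h₂
    set k := Nat.log 2 (pathCount E r v) with hk
    have hk₁ : Nat.log 2 (pathCount E r u₁) = k := by
      have := congrArg Prod.fst hl₁; simpa [lamSym] using this
    have hk₂ : Nat.log 2 (pathCount E r u₂) = k := by
      have := congrArg Prod.fst hl₂; simpa [lamSym] using this
    have hp₁ : 1 ≤ pathCount E r u₁ := pathCount_pos hacyc (hcov u₁).1
    have hp₂ : 1 ≤ pathCount E r u₂ := pathCount_pos hacyc (hcov u₂).1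
    have ha : 2 ^ k ≤ pathCount E r u₁ := hk₁ ▸ Nat.pow_log_le_self 2 (by omega)
    have hb : 2 ^ k ≤ pathCount E r u₂ := hk₂ ▸ Nat.pow_log_le_self 2 (by omega)
    have hc := pathCount_add_le_in hacyc hne e₁ e₂ r
    have := log_lt_of_add ha hb hc
    omega
end

section
/- In the symmetric centroid path decomposition of a finite DAG with unique source r and sink set W, every directed path in the DAG contains at most 2·⌊log₂ π(r, W)⌋ light edges. -/
open scoped Classical

section AuxSymCPD

variable {V : Type*}

private lemma eq_cons_of_head?_aux {l : List V} {v : V} (h : l.head? = some v) :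
    l = v :: l.tail := by
  cases l <;> simp_all

private lemma chain'_head_transGen_aux (E : V → V → Prop) {x y : V} {l : List V}
    (h : (x :: l).Chain' E) (hy : y ∈ l) : Relation.TransGen E x y := by
  induction l generalizing x with
  | nil => simp at hy
  | cons z t ih =>
    have hxz : E x z := (List.isChain_cons_cons.mp h).1
    rcases List.mem_cons.mp hy with rfl | hy'
    · exact Relation.TransGen.single hxz
    · exact (Relation.TransGen.single hxz).trans (ih (List.isChain_cons_cons.mp h).2 hy')

private lemma chain'_nodup_aux (E : V → V → Prop)
    (hacyc : ∀ v : V, ¬ Relation.TransGen E v v) {l : List V} (h : l.Chain' E) :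
    l.Nodup := by
  induction l with
  | nil => simp
  | cons x t ih =>
    exact List.nodup_cons.mpr
      ⟨fun hx => hacyc x (chain'_head_transGen_aux E h hx), ih h.tail⟩

private lemma isDagPath_finite_aux [Fintype V] (E : V → V → Prop)
    (hacyc : ∀ v : V, ¬ Relation.TransGen E v v) (u v : V) :
    {l : List V | IsDagPath E u v l}.Finite :=
  (List.finite_length_le V (Fintype.card V)).subset fun l hl =>
    (chain'_nodup_aux E hacyc hl.1).length_le_card

private lemma isDagPath_append_aux (E : V → V → Prop) {u v w : V} {l p : List V}
    (hl : IsDagPath E u v l) (hp : IsDagPath E v w p) :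
    IsDagPath E u w (l ++ p.tail) := by
  obtain ⟨hlc, hlh, hll⟩ := hl
  obtain ⟨hpc, hph, hpl⟩ := hp
  have hpe : p = v :: p.tail := eq_cons_of_head?_aux hph
  match hq : p.tail with
  | [] =>
    rw [hpe, hq] at hpl
    simp only [List.getLast?_singleton, Option.some.injEq] at hpl
    subst hpl
    simpa using ⟨hlc, hlh, hll⟩
  | y :: s =>
    refine ⟨?_, ?_, ?_⟩
    · unfold List.Chain'; rw [List.isChain_append]
      refine ⟨hlc, by rw [← hq]; exact hpc.tail, ?_⟩
      intro x hx z hz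
      rw [hll] at hx
      simp only [Option.mem_def, Option.some.injEq] at hx hz
      subst hx
      have hyz : y = z := by simpa using hz
      subst hyz
      have : p.Chain' E := hpc
      rw [hpe, hq] at this
      exact (List.isChain_cons_cons.mp this).1
    · have : l ≠ [] := by
        intro h; rw [h] at hlh; simp at hlh
      rw [List.head?_append_of_ne_nil _ this]
      exact hlh
    · rw [List.getLast?_append_cons, ← hpl, hpe, hq, List.getLast?_cons_cons]

private lemma exists_isDagPath_aux (E : V → V → Prop) {u v : V}
    (h : Relation.ReflTransGen E u v) : ∃ l, IsDagPath E u v l := by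
  induction h with
  | refl => exact ⟨[u], List.isChain_singleton u, rfl, rfl⟩
  | @tail b c _ hbc ih =>
    obtain ⟨l, hl⟩ := ih
    have := isDagPath_append_aux E hl
      (show IsDagPath E b c [b, c] from ⟨List.isChain_pair.mpr hbc, rfl, rfl⟩)
    exact ⟨l ++ [c], by simpa using this⟩

private lemma pathCount_le_append_aux [Fintype V] (E : V → V → Prop)
    (hacyc : ∀ v : V, ¬ Relation.TransGen E v v) {u v w : V} {p : List V}
    (hp : IsDagPath E v w p) : pathCount E u v ≤ pathCount E u w :=
  Set.ncard_le_ncard_of_injOn (· ++ p.tail)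
    (fun l hl => isDagPath_append_aux E hl hp)
    (fun _ _ _ _ h => List.append_cancel_right h)
    (isDagPath_finite_aux E hacyc u w)

private lemma pathCount_le_prepend_aux [Fintype V] (E : V → V → Prop)
    (hacyc : ∀ v : V, ¬ Relation.TransGen E v v) {u v w : V} {q : List V}
    (hq : IsDagPath E u v q) : pathCount E v w ≤ pathCount E u w :=
  Set.ncard_le_ncard_of_injOn (fun l => q ++ l.tail)
    (fun l hl => isDagPath_append_aux E hq hl)
    (fun l₁ h₁ l₂ h₂ h => by
      have ht : l₁.tail = l₂.tail := List.append_cancel_left h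
      rw [eq_cons_of_head?_aux h₁.2.1, eq_cons_of_head?_aux h₂.2.1, ht])
    (isDagPath_finite_aux E hacyc u w)

private lemma pathCountTo_le_prepend_aux [Fintype V] (E : V → V → Prop)
    (hacyc : ∀ v : V, ¬ Relation.TransGen E v v) {u v : V} {q : List V} (W : Finset V)
    (hq : IsDagPath E u v q) : pathCountTo E v W ≤ pathCountTo E u W :=
  Finset.sum_le_sum fun _ _ => pathCount_le_prepend_aux E hacyc hq

private lemma countP_mono_le_aux {R : V → V → Prop} {f : V → ℕ}
    (hf : ∀ a b : V, R a b → f a ≤ f b) :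
    ∀ (l : List V) (x z : V), l.Chain' R → l.head? = some x → l.getLast? = some z →
      (l.zip l.tail).countP (fun p => decide (f p.1 < f p.2)) + f x ≤ f z := by
  intro l
  induction l with
  | nil => intro x z _ hx; simp at hx
  | cons a t ih =>
    intro x z hc hx hz
    have hax : a = x := by simpa using hx
    subst hax
    match t, hz with
    | [], hz =>
      have : a = z := by simpa using hz
      subst this; simp
    | y :: s, hz =>
      have hay : R a y := (List.isChain_cons_cons.mp hc).1
      have hys : (y :: s).getLast? = some z := by
        rw [← hz, List.getLast?_cons_cons]
      have := ih y z (List.isChain_cons_cons.mp hc).2 rfl hys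
      simp only [List.tail_cons, List.zip_cons_cons, List.countP_cons] at this ⊢
      have hfa : f a ≤ f y := hf a y hay
      by_cases h : f a < f y <;> simp [h] <;> omega

private lemma countP_anti_le_aux {R : V → V → Prop} {f : V → ℕ}
    (hf : ∀ a b : V, R a b → f b ≤ f a) :
    ∀ (l : List V) (x z : V), l.Chain' R → l.head? = some x → l.getLast? = some z →
      (l.zip l.tail).countP (fun p => decide (f p.2 < f p.1)) + f z ≤ f x := by
  intro l
  induction l with
  | nil => intro x z _ hx; simp at hx
  | cons a t ih =>
    intro x z hc hx hz
    have hax : a = x := by simpa using hx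
    subst hax
    match t, hz with
    | [], hz =>
      have : a = z := by simpa using hz
      subst this; simp
    | y :: s, hz =>
      have hay : R a y := (List.isChain_cons_cons.mp hc).1
      have hys : (y :: s).getLast? = some z := by
        rw [← hz, List.getLast?_cons_cons]
      have := ih y z (List.isChain_cons_cons.mp hc).2 rfl hys
      simp only [List.tail_cons, List.zip_cons_cons, List.countP_cons] at this ⊢
      have hfa : f y ≤ f a := hf a y hay
      by_cases h : f y < f a <;> simp [h] <;> omega

private lemma countP_le_add_aux {α : Type*} (p q r : α → Bool)
    (h : ∀ a, p a = true → q a = true ∨ r a = true) (l : List α) :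
    l.countP p ≤ l.countP q + l.countP r := by
  induction l with
  | nil => simp
  | cons a t ih =>
    simp only [List.countP_cons]
    by_cases hp : p a = true
    · rcases h a hp with hq | hr
      · simp only [hp, hq, if_true]; omega
      · simp only [hp, hr, if_true]; omega
    · simp only [hp, if_false]
      by_cases hq : q a = true <;> by_cases hr : r a = true <;> simp [hq, hr] <;> omega

end AuxSymCPD

/-- every directed path in the DAG contains at most
`2 * ⌊log₂ π(r, W)⌋` light edges. -/
theorem symCPD_light_edges_on_path_le
    {V : Type*} [Fintype V] (E : V → V → Prop) (r : V) (W : Finset V)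
    (hacyc : ∀ v : V, ¬ Relation.TransGen E v v)
    (hr_src : ∀ u : V, ¬ E u r)
    (hr_uniq : ∀ v : V, (∀ u : V, ¬ E u v) → v = r)
    (hW : ∀ v : V, v ∈ W ↔ ∀ u : V, ¬ E v u)
    (hcov : ∀ v : V, Relation.ReflTransGen E r v ∧ ∃ w ∈ W, Relation.ReflTransGen E v w) :
    ∀ l : List V, l.Chain' E →
      lightEdgeCount E r W l ≤ 2 * Nat.log 2 (pathCountTo E r W) := by
  intro l hl
  classical
  set a : V → ℕ := fun v => Nat.log 2 (pathCount E r v) with ha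
  set b : V → ℕ := fun v => Nat.log 2 (pathCountTo E v W) with hb
  set L : ℕ := Nat.log 2 (pathCountTo E r W) with hLdef
  have hmono : ∀ u v : V, E u v → a u ≤ a v := by
    intro u v huv
    exact Nat.log_mono_right
      (pathCount_le_append_aux E hacyc ⟨List.isChain_pair.mpr huv, rfl, rfl⟩)
  have hanti : ∀ u v : V, E u v → b v ≤ b u := by
    intro u v huv
    exact Nat.log_mono_right
      (pathCountTo_le_prepend_aux E hacyc W ⟨List.isChain_pair.mpr huv, rfl, rfl⟩)
  have haL : ∀ v : V, a v ≤ L := by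
    intro v
    obtain ⟨w, hw, hreach⟩ := (hcov v).2
    obtain ⟨p, hp⟩ := exists_isDagPath_aux E hreach
    have h1 : pathCount E r v ≤ pathCount E r w := pathCount_le_append_aux E hacyc hp
    have h2 : pathCount E r w ≤ pathCountTo E r W :=
      Finset.single_le_sum (fun _ _ => Nat.zero_le _) hw
    exact Nat.log_mono_right (h1.trans h2)
  have hbL : ∀ v : V, b v ≤ L := by
    intro v
    obtain ⟨q, hq⟩ := exists_isDagPath_aux E (hcov v).1
    exact Nat.log_mono_right (pathCountTo_le_prepend_aux E hacyc W hq)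
  have key : ∀ u v : V, LightEdge E r W u v → a u < a v ∨ b v < b u := by
    rintro u v ⟨he, hne⟩
    rcases (hmono u v he).lt_or_eq with h | h
    · exact Or.inl h
    rcases (hanti u v he).lt_or_eq with h' | h'
    · exact Or.inr h'
    exact absurd (Prod.ext (show (lamSym E r W u).1 = (lamSym E r W v).1 from h) (show (lamSym E r W u).2 = (lamSym E r W v).2 from h'.symm)) hne
  match l, hl with
  | [], _ => simp [lightEdgeCount]
  | x :: t, hl =>
    have hne : (x :: t) ≠ [] := by simp
    obtain ⟨z, hz⟩ := Option.isSome_iff_exists.mp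
      (List.getLast?_isSome.mpr hne)
    have hsplit := countP_le_add_aux
      (fun p : V × V => decide (LightEdge E r W p.1 p.2))
      (fun p : V × V => decide (a p.1 < a p.2))
      (fun p : V × V => decide (b p.2 < b p.1))
      (by
        intro p hp
        rcases key p.1 p.2 (of_decide_eq_true hp) with h | h
        · exact Or.inl (decide_eq_true h)
        · exact Or.inr (decide_eq_true h))
      ((x :: t).zip t)
    have h1 := countP_mono_le_aux hmono (x :: t) x z hl rfl hz
    have h2 := countP_anti_le_aux hanti (x :: t) x z hl rfl hz
    have hax := haL z
    have hbx := hbL x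
    unfold lightEdgeCount
    simp only [List.tail_cons] at hsplit h1 h2 ⊢
    omega
end

section
/- In the symmetric centroid path decomposition of a finite DAG with unique source r and sink set W, the number of light edges is at most (Σ_{v : deg⁺(v) ≥ 2} deg⁺(v)) + (Σ_{v : deg⁻(v) ≥ 2} deg⁻(v)), where deg⁺(v) and deg⁻(v) denote the out-degree and in-degree of v; that is, every light edge is counted by a tail of out-degree at least 2 or a head of in-degree at least 2. -/
open scoped Classical

lemma pathSet_cons {V : Type*} (E : V → V → Prop) (u v w : V)
    (he : E u v) (hout : ∀ x, E u x → x = v) (hw : w ≠ u) :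
    {l : List V | IsDagPath E u w l} = List.cons u '' {l : List V | IsDagPath E v w l} := by
  ext l
  constructor
  · rintro ⟨hc, hh, hl⟩
    cases l with
    | nil => simp at hh
    | cons a t =>
      simp only [List.head?_cons, Option.some.injEq] at hh
      subst hh
      cases t with
      | nil => simp at hl; exact absurd hl.symm hw
      | cons b t' =>
        unfold List.Chain' at hc; rw [List.isChain_cons_cons] at hc
        have hb : b = v := hout b hc.1
        subst hb
        exact ⟨_ :: t', ⟨hc.2, rfl, by rwa [List.getLast?_cons_cons] at hl⟩, rfl⟩
  · rintro ⟨m, ⟨hc, hh, hl⟩, rfl⟩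
    cases m with
    | nil => simp at hh
    | cons a t =>
      simp only [List.head?_cons, Option.some.injEq] at hh
      subst hh
      exact ⟨List.isChain_cons_cons.mpr ⟨he, hc⟩, rfl, by rwa [List.getLast?_cons_cons]⟩

lemma pathSet_concat {V : Type*} (E : V → V → Prop) (r u v : V)
    (he : E u v) (hin : ∀ x, E x v → x = u) (hv : v ≠ r) :
    {l : List V | IsDagPath E r v l} = (fun l => l ++ [v]) '' {l : List V | IsDagPath E r u l} := by
  ext l
  constructor
  · rintro ⟨hc, hh, hl⟩
    have hne : l ≠ [] := by rintro rfl; simp at hh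
    have hdec : l.dropLast ++ [l.getLast hne] = l := List.dropLast_append_getLast hne
    have hlast : l.getLast hne = v := by
      rw [List.getLast?_eq_getLast hne] at hl
      exact Option.some_injective _ hl
    rw [hlast] at hdec
    have hd_ne : l.dropLast ≠ [] := by
      intro h0
      rw [h0, List.nil_append] at hdec
      rw [← hdec] at hh
      simp at hh
      exact hv hh
    refine ⟨l.dropLast, ⟨?_, ?_, ?_⟩, hdec⟩
    · unfold List.Chain' at hc; rw [← hdec, List.isChain_append] at hc; exact hc.1
    · have hh' : (l.dropLast ++ [v]).head? = some r := by rw [hdec]; exact hh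
      cases hld : l.dropLast with
      | nil => exact absurd hld hd_ne
      | cons a t => rw [hld] at hh'; simp at hh' ⊢; exact hh'
    · unfold List.Chain' at hc; rw [← hdec, List.isChain_append] at hc
      have := hc.2.2 (l.dropLast.getLast hd_ne) (List.getLast?_eq_getLast hd_ne) v rfl
      rw [List.getLast?_eq_getLast hd_ne]
      exact congrArg some (hin _ this)
  · rintro ⟨m, ⟨hc, hh, hl⟩, rfl⟩
    have hm : m ≠ [] := by rintro rfl; simp at hh
    refine ⟨?_, ?_, List.getLast?_concat⟩
    · unfold List.Chain'; rw [List.isChain_append]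
      refine ⟨hc, List.isChain_singleton v, ?_⟩
      intro x hx y hy
      simp only [List.head?_cons, Option.mem_def, Option.some.injEq] at hy
      subst hy
      rw [Option.mem_def, hl] at hx
      cases hx; exact he
    · cases m with
      | nil => simp at hh
      | cons a t => simpa using hh

lemma lam_eq_of_unique {V : Type*} (E : V → V → Prop) (r : V) (W : Finset V)
    (hr_src : ∀ u : V, ¬ E u r) (hW : ∀ v : V, v ∈ W ↔ ∀ u : V, ¬ E v u)
    (u v : V) (he : E u v) (hout : ∀ x, E u x → x = v) (hin : ∀ x, E x v → x = u) :
    lamSym E r W u = lamSym E r W v := by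
  have hv : v ≠ r := fun h => hr_src u (h ▸ he)
  have hinj : Function.Injective (fun l : List V => l ++ [v]) := by
    intro a b h; simpa using List.append_cancel_right h
  have h1 : pathCount E r v = pathCount E r u := by
    rw [pathCount, pathCount, pathSet_concat E r u v he hin hv,
      Set.ncard_image_of_injective _ hinj]
  have h2 : pathCountTo E u W = pathCountTo E v W := by
    unfold pathCountTo
    refine Finset.sum_congr rfl fun w hw => ?_
    have hwu : w ≠ u := fun h => (hW w).1 hw v (h ▸ he)
    rw [pathCount, pathCount, pathSet_cons E u v w he hout hwu,
      Set.ncard_image_of_injective _ (List.cons_injective)]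
  simp [lamSym, h1, h2]

/-- the number of light edges is at most
`(Σ_{v : deg⁺(v) ≥ 2} deg⁺(v)) + (Σ_{v : deg⁻(v) ≥ 2} deg⁻(v))`. -/
theorem symCPD_light_edge_count_le
    {V : Type*} [Fintype V] (E : V → V → Prop) (r : V) (W : Finset V)
    (hacyc : ∀ v : V, ¬ Relation.TransGen E v v)
    (hr_src : ∀ u : V, ¬ E u r)
    (hr_uniq : ∀ v : V, (∀ u : V, ¬ E u v) → v = r)
    (hW : ∀ v : V, v ∈ W ↔ ∀ u : V, ¬ E v u)
    (hcov : ∀ v : V, Relation.ReflTransGen E r v ∧ ∃ w ∈ W, Relation.ReflTransGen E v w) :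
    ((Finset.univ : Finset (V × V)).filter (fun p => LightEdge E r W p.1 p.2)).card ≤
      (∑ v ∈ Finset.univ.filter
          (fun v : V => 2 ≤ (Finset.univ.filter (fun w => E v w)).card),
        (Finset.univ.filter (fun w => E v w)).card) +
      (∑ v ∈ Finset.univ.filter
          (fun v : V => 2 ≤ (Finset.univ.filter (fun w => E w v)).card),
        (Finset.univ.filter (fun w => E w v)).card) := by
  classical
  set A := Finset.univ.filter
    (fun p : V × V => E p.1 p.2 ∧ 2 ≤ (Finset.univ.filter (fun w => E p.1 w)).card) with hA
  set B := Finset.univ.filter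
    (fun p : V × V => E p.1 p.2 ∧ 2 ≤ (Finset.univ.filter (fun w => E w p.2)).card) with hB
  have hsub : (Finset.univ : Finset (V × V)).filter (fun p => LightEdge E r W p.1 p.2)
      ⊆ A ∪ B := by
    intro p hp
    rw [Finset.mem_filter] at hp
    obtain ⟨-, he, hne⟩ := hp
    rw [Finset.mem_union, hA, hB, Finset.mem_filter, Finset.mem_filter]
    by_contra hcon
    push_neg at hcon
    obtain ⟨h1, h2⟩ := hcon
    have hd1 : (Finset.univ.filter (fun w => E p.1 w)).card ≤ 1 := by
      have := h1 (Finset.mem_univ p) he; omega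
    have hd2 : (Finset.univ.filter (fun w => E w p.2)).card ≤ 1 := by
      have := h2 (Finset.mem_univ p) he; omega
    have hout : ∀ x, E p.1 x → x = p.2 := fun x hx =>
      Finset.card_le_one.mp hd1 x (by simp [hx]) p.2 (by simp [he])
    have hin : ∀ x, E x p.2 → x = p.1 := fun x hx =>
      Finset.card_le_one.mp hd2 x (by simp [hx]) p.1 (by simp [he])
    exact hne (lam_eq_of_unique E r W hr_src hW p.1 p.2 he hout hin)
  have hcard : ((Finset.univ : Finset (V × V)).filter
      (fun p => LightEdge E r W p.1 p.2)).card ≤ A.card + B.card :=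
    le_trans (Finset.card_le_card hsub) (Finset.card_union_le A B)
  have hAcard : A.card = ∑ v ∈ Finset.univ.filter
      (fun v : V => 2 ≤ (Finset.univ.filter (fun w => E v w)).card),
      (Finset.univ.filter (fun w => E v w)).card := by
    rw [Finset.card_eq_sum_card_fiberwise (f := Prod.fst)
      (t := Finset.univ.filter (fun v : V => 2 ≤ (Finset.univ.filter (fun w => E v w)).card))
      (fun p hp => by simp only [hA, Finset.mem_coe, Finset.mem_filter] at hp; simp [hp.2.2])]
    refine Finset.sum_congr rfl fun u hu => ?_
    rw [Finset.mem_filter] at hu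
    have : A.filter (fun p => p.1 = u) = {u} ×ˢ Finset.univ.filter (fun w => E u w) := by
      ext ⟨a, b⟩
      simp only [hA, Finset.mem_filter, Finset.mem_univ, true_and, Finset.mem_product,
        Finset.mem_singleton]
      constructor
      · rintro ⟨⟨hab, -⟩, rfl⟩; exact ⟨rfl, hab⟩
      · rintro ⟨rfl, hab⟩; exact ⟨⟨hab, hu.2⟩, rfl⟩
    rw [this, Finset.card_product, Finset.card_singleton, one_mul]
  have hBcard : B.card = ∑ v ∈ Finset.univ.filter
      (fun v : V => 2 ≤ (Finset.univ.filter (fun w => E w v)).card),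
      (Finset.univ.filter (fun w => E w v)).card := by
    rw [Finset.card_eq_sum_card_fiberwise (f := Prod.snd)
      (t := Finset.univ.filter (fun v : V => 2 ≤ (Finset.univ.filter (fun w => E w v)).card))
      (fun p hp => by simp only [hB, Finset.mem_coe, Finset.mem_filter] at hp; simp [hp.2.2])]
    refine Finset.sum_congr rfl fun u hu => ?_
    rw [Finset.mem_filter] at hu
    have : B.filter (fun p => p.2 = u) = (Finset.univ.filter (fun w => E w u)) ×ˢ {u} := by
      ext ⟨a, b⟩
      simp only [hB, Finset.mem_filter, Finset.mem_univ, true_and, Finset.mem_product,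
        Finset.mem_singleton]
      constructor
      · rintro ⟨⟨hab, -⟩, rfl⟩; exact ⟨hab, rfl⟩
      · rintro ⟨hab, rfl⟩; exact ⟨⟨hab, hu.2⟩, rfl⟩
    rw [this, Finset.card_product, Finset.card_singleton, mul_one]
  rw [hAcard, hBcard] at hcard
  exact hcard
end

section
/- In the symmetric centroid path decomposition of a finite DAG with unique source r and sink set W, every directed path from r to a vertex of W consists of at most 1 + 2·⌊log₂ π(r,W)⌋ maximal runs of consecutive heavy edges, where a maximal run is a maximal contiguous (possibly empty between two light edges) block of heavy edges along the path; equivalently, the path alternates between blocks of consecutive heavy edges and single light edges, with at most 2·⌊log₂ π(r,W)⌋ light edges separating at most 1 + 2·⌊log₂ π(r,W)⌋ heavy blocks. -/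
open scoped Classical

section SymCPDAux

variable {V : Type*}

private lemma chain_transGen' {E : V → V → Prop} :
    ∀ {a : V} {t : List V}, List.Chain E a t → ∀ x ∈ t, Relation.TransGen E a x := by
  intro a t h x hx
  induction t generalizing a with
  | nil => simp at hx
  | cons b t ih =>
    rcases List.chain_cons.mp h with ⟨hab, hbt⟩
    rcases List.mem_cons.mp hx with rfl | hx'
    · exact Relation.TransGen.single hab
    · exact Relation.TransGen.head hab (ih hbt hx')

private lemma chain'_nodup' {E : V → V → Prop} (hacyc : ∀ v : V, ¬ Relation.TransGen E v v) :
    ∀ {l : List V}, l.Chain' E → l.Nodup := by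
  intro l h
  induction l with
  | nil => simp
  | cons a t ih =>
    have hch : List.Chain E a t := h
    refine List.nodup_cons.mpr ⟨fun hmem => hacyc a (chain_transGen' hch a hmem), ih h.tail⟩

private lemma pathSet_finite [Fintype V] {E : V → V → Prop}
    (hacyc : ∀ v : V, ¬ Relation.TransGen E v v) (u v : V) :
    {l : List V | IsDagPath E u v l}.Finite := by
  apply (List.finite_length_le V (Fintype.card V)).subset
  intro l hl
  exact (chain'_nodup' hacyc hl.1).length_le_card

private lemma pathCount_le_of_edge [Fintype V] {E : V → V → Prop}
    (hacyc : ∀ v : V, ¬ Relation.TransGen E v v) (r u v : V) (huv : E u v) :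
    pathCount E r u ≤ pathCount E r v := by
  refine Set.ncard_le_ncard_of_injOn (fun l => l ++ [v]) ?_ ?_ (pathSet_finite hacyc r v)
  · rintro l ⟨hc, hh, hg⟩
    have hne : l ≠ [] := by intro h; simp [h] at hh
    refine ⟨?_, ?_, by simp [List.getLast?_concat]⟩
    · refine List.isChain_append.mpr ?_
      refine ⟨hc, List.isChain_singleton v, fun x hx y hy => ?_⟩
      rw [hg] at hx
      simp only [Option.mem_def, Option.some.injEq] at hx
      simp only [List.head?_cons, Option.mem_def, Option.some.injEq] at hy
      rw [← hx, ← hy]; exact huv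
    · cases l with
      | nil => exact absurd rfl hne
      | cons a t => simpa using hh
  · intro l1 _ l2 _ h
    have := congrArg List.dropLast h
    simpa [List.dropLast_concat] using this

private lemma pathCountTo_le_of_edge [Fintype V] {E : V → V → Prop}
    (hacyc : ∀ v : V, ¬ Relation.TransGen E v v) (W : Finset V) (u v : V) (huv : E u v) :
    pathCountTo E v W ≤ pathCountTo E u W := by
  apply Finset.sum_le_sum
  intro w _
  refine Set.ncard_le_ncard_of_injOn (fun l => u :: l) ?_ ?_ (pathSet_finite hacyc u w)
  · rintro l ⟨hc, hh, hg⟩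
    have hne : l ≠ [] := by intro h; simp [h] at hh
    refine ⟨?_, rfl, ?_⟩
    · refine List.isChain_cons.mpr ⟨fun b hb => ?_, hc⟩
      rw [hh] at hb
      simp only [Option.mem_def, Option.some.injEq] at hb
      rw [← hb]; exact huv
    · cases l with
      | nil => exact absurd rfl hne
      | cons a t => rw [List.getLast?_cons_cons]; exact hg
  · intro l1 _ l2 _ h
    exact List.tail_eq_of_cons_eq h

private lemma pathCount_self_eq_one {E : V → V → Prop}
    (hacyc : ∀ v : V, ¬ Relation.TransGen E v v) (r : V) :
    pathCount E r r = 1 := by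
  have hset : {l : List V | IsDagPath E r r l} = {[r]} := by
    ext l
    simp only [Set.mem_setOf_eq, Set.mem_singleton_iff]
    constructor
    · rintro ⟨hc, hh, hg⟩
      cases l with
      | nil => simp at hh
      | cons a t =>
        have ha : r = a := by simpa using hh.symm
        subst ha
        cases t with
        | nil => rfl
        | cons b t' =>
          exfalso
          rw [List.getLast?_cons_cons] at hg
          obtain ⟨hne, hx⟩ := List.mem_getLast?_eq_getLast (l := b :: t') (x := r) hg
          have hmem : r ∈ b :: t' := hx ▸ List.getLast_mem hne
          exact hacyc r (chain_transGen' (hc : List.Chain E r (b :: t')) r hmem)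
    · rintro rfl
      exact ⟨List.isChain_singleton r, rfl, rfl⟩
  rw [pathCount, hset, Set.ncard_singleton]

private lemma sink_path_eq {E : V → V → Prop} {w : V} (hsink : ∀ u : V, ¬ E w u)
    {v : V} {l : List V} (h : IsDagPath E w v l) : l = [w] ∧ v = w := by
  obtain ⟨hc, hh, hg⟩ := h
  cases l with
  | nil => simp at hh
  | cons a t =>
    have ha : w = a := by simpa using hh.symm
    subst ha
    cases t with
    | nil =>
      refine ⟨rfl, ?_⟩
      simpa using hg.symm
    | cons b t' =>
      exact absurd (List.chain_cons.mp (hc : List.Chain E w (b :: t'))).1 (hsink b)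

private lemma pathCountTo_sink_eq_one {E : V → V → Prop} {W : Finset V} {w : V}
    (hwW : w ∈ W) (hsink : ∀ u : V, ¬ E w u) :
    pathCountTo E w W = 1 := by
  rw [pathCountTo, Finset.sum_eq_single_of_mem w hwW]
  · have hset : {l : List V | IsDagPath E w w l} = {[w]} := by
      ext l
      simp only [Set.mem_setOf_eq, Set.mem_singleton_iff]
      constructor
      · intro h; exact (sink_path_eq hsink h).1
      · rintro rfl; exact ⟨List.isChain_singleton w, rfl, rfl⟩
    rw [pathCount, hset, Set.ncard_singleton]
  · intro v _ hvw
    have hset : {l : List V | IsDagPath E w v l} = ∅ := by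
      ext l
      simp only [Set.mem_setOf_eq, Set.mem_empty_iff_false, iff_false]
      intro h
      exact hvw (sink_path_eq hsink h).2
    rw [pathCount, hset, Set.ncard_empty]

private lemma master_count {E : V → V → Prop} (f g : V → ℕ) (p : V × V → Bool)
    (hf : ∀ u v, E u v → f u ≤ f v) (hg : ∀ u v, E u v → g v ≤ g u)
    (hp : ∀ u v, E u v → p (u, v) = true → f u ≠ f v ∨ g u ≠ g v) :
    ∀ (a : V) (t : List V), List.Chain E a t →
      ((a :: t).zip t).countP p + f a + g ((a :: t).getLast (List.cons_ne_nil a t))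
        ≤ f ((a :: t).getLast (List.cons_ne_nil a t)) + g a := by
  intro a t h
  induction t generalizing a with
  | nil => simp
  | cons b t ih =>
    rcases List.chain_cons.mp h with ⟨hab, hbt⟩
    have IH := ih b hbt
    have h1 := hf _ _ hab
    have h2 := hg _ _ hab
    have hz : ((a :: b :: t).zip (b :: t)) = (a, b) :: ((b :: t).zip t) := rfl
    rw [hz, List.countP_cons,
        List.getLast_cons (List.cons_ne_nil b t)]
    by_cases hp' : p (a, b) = true
    · rcases hp _ _ hab hp' with h3 | h3 <;> rw [if_pos hp'] <;> omega
    · rw [if_neg hp']; omega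

end SymCPDAux

/-- every directed path from `r` to a vertex of `W` consists of at most
`1 + 2 * ⌊log₂ π(r,W)⌋` maximal (possibly empty) blocks of consecutive heavy edges;
equivalently, the blocks are separated by single light edges, so the number of blocks,
which equals the number of light edges plus one, is at most `1 + 2 * ⌊log₂ π(r,W)⌋`. -/
theorem symCPD_heavy_blocks_on_path_le
    {V : Type*} [Fintype V] (E : V → V → Prop) (r : V) (W : Finset V)
    (hacyc : ∀ v : V, ¬ Relation.TransGen E v v)
    (hr_src : ∀ u : V, ¬ E u r)
    (hr_uniq : ∀ v : V, (∀ u : V, ¬ E u v) → v = r)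
    (hW : ∀ v : V, v ∈ W ↔ ∀ u : V, ¬ E v u)
    (hcov : ∀ v : V, Relation.ReflTransGen E r v ∧ ∃ w ∈ W, Relation.ReflTransGen E v w) :
    ∀ l : List V, l.Chain' E → l.head? = some r → (∃ w ∈ W, l.getLast? = some w) →
      lightEdgeCount E r W l + 1 ≤ 1 + 2 * Nat.log 2 (pathCountTo E r W) := by
  rintro l hchain hhead ⟨w, hwW, hlast⟩
  cases l with
  | nil => simp at hhead
  | cons a t =>
    have ha : r = a := by simpa using hhead.symm
    subst ha
    set f : V → ℕ := fun v => Nat.log 2 (pathCount E r v) with hf_def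
    set g : V → ℕ := fun v => Nat.log 2 (pathCountTo E v W) with hg_def
    have hsink : ∀ u : V, ¬ E w u := (hW w).mp hwW
    have key := master_count (E := E) f g
      (fun p => decide (LightEdge E r W p.1 p.2))
      (fun u v huv => Nat.log_mono_right (pathCount_le_of_edge hacyc r u v huv))
      (fun u v huv => Nat.log_mono_right (pathCountTo_le_of_edge hacyc W u v huv))
      (fun u v huv hp => by
        simp only [decide_eq_true_iff] at hp
        obtain ⟨-, hne⟩ := hp
        by_contra hcon
        push_neg at hcon
        exact hne (Prod.ext hcon.1 hcon.2))
      r t (hchain : List.Chain E r t)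
    have hlast' : (r :: t).getLast (List.cons_ne_nil r t) = w := by
      rw [List.getLast?_eq_getLast (l := r :: t) (List.cons_ne_nil r t)] at hlast
      simpa using hlast
    rw [hlast'] at key
    have hfr : f r = 0 := by
      simp [hf_def, pathCount_self_eq_one hacyc r]
    have hgw : g w = 0 := by
      simp [hg_def, pathCountTo_sink_eq_one hwW hsink]
    have hfw : f w ≤ Nat.log 2 (pathCountTo E r W) := by
      apply Nat.log_mono_right
      exact Finset.single_le_sum (fun i _ => Nat.zero_le _) hwW
    have hgr : g r = Nat.log 2 (pathCountTo E r W) := rfl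
    have hcount : lightEdgeCount E r W (r :: t)
        = ((r :: t).zip t).countP (fun p => decide (LightEdge E r W p.1 p.2)) := rfl
    rw [hfr, hgw, hgr] at key
    rw [hcount]
    omega
end

section
/- In the symmetric centroid path decomposition of a finite DAG with unique source r and sink set W, the quantity ⌊log₂ π(r, ·)⌋ is nondecreasing and the quantity ⌊log₂ π(·, W)⌋ is nonincreasing along every directed path, and for every light edge (u,v) at least one of the two strict inequalities ⌊log₂ π(r,u)⌋ < ⌊log₂ π(r,v)⌋ or ⌊log₂ π(v,W)⌋ < ⌊log₂ π(u,W)⌋ holds. -/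
open scoped Classical

/-- Path sets are finite in an acyclic graph over a fintype. -/
lemma dagPath_finite {V : Type*} [Fintype V] (E : V → V → Prop)
    (hacyc : ∀ v : V, ¬ Relation.TransGen E v v) (u v : V) :
    {l : List V | IsDagPath E u v l}.Finite := by
  apply (List.finite_length_le V (Fintype.card V)).subset
  intro l hl
  have hp : l.Pairwise (Relation.TransGen E) :=
    List.isChain_iff_pairwise.mp (hl.1.imp fun a b h => Relation.TransGen.single h)
  have hnd : l.Nodup := hp.imp fun h => by
    intro heq; exact hacyc _ (heq ▸ h)
  exact hnd.length_le_card

lemma pathCount_le_of_edge_right {V : Type*} [Fintype V] (E : V → V → Prop)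
    (hacyc : ∀ v : V, ¬ Relation.TransGen E v v) {u v : V} (h : E u v) (r : V) :
    pathCount E r u ≤ pathCount E r v := by
  refine Set.ncard_le_ncard_of_injOn (fun l => l ++ [v]) ?_ ?_ (dagPath_finite E hacyc r v)
  · rintro l ⟨hc, hh, hlast⟩
    have hne : l ≠ [] := by rintro rfl; simp at hh
    refine ⟨?_, ?_, ?_⟩
    · unfold List.Chain'; rw [List.isChain_append]
      refine ⟨hc, List.isChain_singleton v, ?_⟩
      intro x hx y hy
      simp only [List.head?_cons, Option.mem_def, Option.some.injEq] at hy
      rw [hlast] at hx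
      simp only [Option.mem_def, Option.some.injEq] at hx
      subst hx; subst hy; exact h
    · rw [List.head?_append_of_ne_nil _ hne]; exact hh
    · simp
  · exact fun a _ b _ hab => List.append_left_injective [v] hab

lemma pathCount_le_of_edge_left {V : Type*} [Fintype V] (E : V → V → Prop)
    (hacyc : ∀ v : V, ¬ Relation.TransGen E v v) {u v : V} (h : E u v) (w : V) :
    pathCount E v w ≤ pathCount E u w := by
  refine Set.ncard_le_ncard_of_injOn (fun l => u :: l) ?_ ?_ (dagPath_finite E hacyc u w)
  · rintro l ⟨hc, hh, hlast⟩
    have hne : l ≠ [] := by rintro rfl; simp at hh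
    refine ⟨?_, ?_, ?_⟩
    · unfold List.Chain'; rw [List.isChain_cons]
      refine ⟨?_, hc⟩
      intro y hy
      rw [hh] at hy
      simp only [Option.mem_def, Option.some.injEq] at hy
      subst hy; exact h
    · simp
    · match l, hne with
      | a :: l', _ => rw [show (u :: a :: l').getLast? = (a :: l').getLast? from List.getLast?_cons_cons]; exact hlast
  · exact fun a _ b _ hab => by simpa using hab

/-- `⌊log₂ π(r,·)⌋` is nondecreasing and `⌊log₂ π(·,W)⌋` is
nonincreasing along every edge (hence along every directed path), and for every light
edge `(u,v)` at least one of the two inequalities is strict. -/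
theorem symCPD_floor_log_monotone_and_light_strict
    {V : Type*} [Fintype V] (E : V → V → Prop) (r : V) (W : Finset V)
    (hacyc : ∀ v : V, ¬ Relation.TransGen E v v)
    (hr_src : ∀ u : V, ¬ E u r)
    (hr_uniq : ∀ v : V, (∀ u : V, ¬ E u v) → v = r)
    (hW : ∀ v : V, v ∈ W ↔ ∀ u : V, ¬ E v u)
    (hcov : ∀ v : V, Relation.ReflTransGen E r v ∧ ∃ w ∈ W, Relation.ReflTransGen E v w) :
    ∀ u v : V, E u v →
      Nat.log 2 (pathCount E r u) ≤ Nat.log 2 (pathCount E r v) ∧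
      Nat.log 2 (pathCountTo E v W) ≤ Nat.log 2 (pathCountTo E u W) ∧
      (LightEdge E r W u v →
        Nat.log 2 (pathCount E r u) < Nat.log 2 (pathCount E r v) ∨
        Nat.log 2 (pathCountTo E v W) < Nat.log 2 (pathCountTo E u W)) := by
  intro u v huv
  have h1 : Nat.log 2 (pathCount E r u) ≤ Nat.log 2 (pathCount E r v) :=
    Nat.log_mono_right (pathCount_le_of_edge_right E hacyc huv r)
  have h2 : Nat.log 2 (pathCountTo E v W) ≤ Nat.log 2 (pathCountTo E u W) :=
    Nat.log_mono_right (Finset.sum_le_sum fun w _ => pathCount_le_of_edge_left E hacyc huv w)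
  refine ⟨h1, h2, ?_⟩
  rintro ⟨-, hne⟩
  by_contra hcon
  push_neg at hcon
  apply hne
  simp only [lamSym, Prod.mk.injEq]
  exact ⟨le_antisymm h1 hcon.1, le_antisymm hcon.2 h2⟩
end
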